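/- Assume condition (A) holds. Then for every vertex u ∈ 𝔽₂^X, either the small cube S_u containing u intersects the Hamming code C, or there exists x ∈ X such that the small cube S_{u + b(x)} containing u + b(x) intersects C. -/

import Mathlib

/-- Assume condition (A). Then for every vertex `u ∈ 𝔽₂^X`, either the small cube
`S_u` containing `u` meets the Hamming code `C`, or there is a direction `x ∈ X`
such that the small cube containing `u + b(x)` meets `C`. -/
theorem statement12 (k d : ℕ) (hk : 1 ≤ k)
    (X : Finset (Fin k → ZMod 2)) (hX0 : (0 : Fin k → ZMod 2) ∉ X)
    (hXcard : X.card = d)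
    (D : Finset (Fin k → ZMod 2)) (hDX : D ⊆ X)
    (W : Submodule (ZMod 2) (Fin k → ZMod 2))
    (hW : W = Submodule.span (ZMod 2) (D : Set (Fin k → ZMod 2)))
    (spanB : Submodule (ZMod 2) ({x // x ∈ X} → ZMod 2))
    (hspanB : spanB = Submodule.span (ZMod 2)
      {v | ∃ x : {x // x ∈ X}, (x : Fin k → ZMod 2) ∈ D ∧ v = Pi.single x (1 : ZMod 2)})
    (C : Set ({x // x ∈ X} → ZMod 2))
    (hC : C = {u | ∑ x : {x // x ∈ X}, u x • (x : Fin k → ZMod 2) = 0})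
    (hA : ∀ t : (Fin k → ZMod 2) ⧸ W, t ≠ 0 →
      ∃ x ∈ X, (Submodule.Quotient.mk x : (Fin k → ZMod 2) ⧸ W) = t)
    (u : {x // x ∈ X} → ZMod 2) :
    ({v | v - u ∈ spanB} ∩ C).Nonempty ∨
      ∃ x : {x // x ∈ X},
        ({v | v - (u + Pi.single x 1) ∈ spanB} ∩ C).Nonempty := by
  classical
  set φ : ({x // x ∈ X} → ZMod 2) →ₗ[ZMod 2] (Fin k → ZMod 2) :=
    { toFun := fun u => ∑ x : {x // x ∈ X}, u x • (x : Fin k → ZMod 2)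
      map_add' := by
        intro a b
        simp [add_smul, Finset.sum_add_distrib]
      map_smul' := by
        intro c a
        simp [Finset.smul_sum, smul_smul] }
  have hφsingle : ∀ x : {x // x ∈ X}, φ (Pi.single x 1) = (x : Fin k → ZMod 2) := by
    intro x
    simp only [φ, LinearMap.coe_mk, AddHom.coe_mk]
    show ∑ y : {x // x ∈ X}, (Pi.single x (1 : ZMod 2) : {x // x ∈ X} → ZMod 2) y •
      (y : Fin k → ZMod 2) = (x : Fin k → ZMod 2)
    rw [Finset.sum_eq_single x]
    · simp
    · intro y _ hy
      simp [Pi.single_apply, (Ne.symm hy)]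
    · simp
  have hmap : Submodule.map φ spanB = W := by
    rw [hspanB, hW, Submodule.map_span]
    congr 1
    ext z
    constructor
    · rintro ⟨v, ⟨x, hxD, rfl⟩, rfl⟩
      simpa [hφsingle] using hxD
    · intro hz
      exact ⟨Pi.single (⟨z, hDX hz⟩ : {x // x ∈ X}) 1, ⟨⟨z, hDX hz⟩, hz, rfl⟩,
        hφsingle _⟩
  have key : ∀ a : {x // x ∈ X} → ZMod 2, φ a ∈ W →
      ({v | v - a ∈ spanB} ∩ C).Nonempty := by
    intro a ha
    rw [← hmap] at ha
    obtain ⟨w, hw, hφw⟩ := ha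
    refine ⟨a - w, ?_, ?_⟩
    · show (a - w) - a ∈ spanB
      simpa using spanB.neg_mem hw
    · show a - w ∈ C
      rw [hC]
      show φ (a - w) = 0
      rw [map_sub, hφw, sub_self]
  by_cases h0 : (Submodule.Quotient.mk (φ u) : (Fin k → ZMod 2) ⧸ W) = 0
  · exact Or.inl (key u ((Submodule.Quotient.mk_eq_zero W).mp h0))
  · obtain ⟨x, hxX, hx⟩ := hA _ h0
    right
    refine ⟨⟨x, hxX⟩, key _ ?_⟩
    rw [map_add, hφsingle]
    have hsub : x - φ u ∈ W := (Submodule.Quotient.eq W).mp hx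
    have hnx : -x = x := by
      funext i
      have : ∀ a : ZMod 2, -a = a := by decide
      exact this (x i)
    have : φ u + x = φ u - x := by rw [sub_eq_add_neg, hnx]
    rw [this]
    simpa using W.neg_mem hsub
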